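/- Let d ≥ 1 and t ≥ 1 be integers, let x > 0 and δ > 0 be reals, and let n = (d+1)t+1. Let e₁,…,e_d denote the standard basis of ℝ^d, and let v₁,…,vₙ ∈ ℝ^d be such that exactly t+1 of the indices have v_i = 0 and, for each j ∈ {1,…,d}, exactly t of the indices have v_i = x·e₁ + δ·e_j. Then ⋂_{I ⊆ {1,…,n}, |I| = n−t} conv{ v_i : i ∈ I } = {0}, where conv denotes the convex hull. -/
import Mathlib

open Finset

/-- The lower-bound construction: with `n = (d+1)t + 1` vectors in `ℝ^d`, of which exactly
`t+1` equal `0` and, for each `j`, exactly `t` equal `x·e₁ + δ·e_j`, the intersection over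
all `(n-t)`-element index sets `I` of the convex hulls of `{v_i : i ∈ I}` (the SafeArea)
is exactly `{0}`. -/
theorem safeArea_eq_singleton_zero (d t : ℕ) (hd : 0 < d) (ht : 1 ≤ t)
    (x δ : ℝ) (hx : 0 < x) (hδ : 0 < δ) (n : ℕ) (hn : n = (d + 1) * t + 1)
    (v : Fin n → EuclideanSpace ℝ (Fin d))
    (h0 : {i : Fin n | v i = 0}.ncard = t + 1)
    (hj : ∀ j : Fin d,
      {i : Fin n | v i = EuclideanSpace.single (⟨0, hd⟩ : Fin d) x +
        EuclideanSpace.single j δ}.ncard = t) :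
    (⋂ (I : Finset (Fin n)) (_ : I.card = n - t), convexHull ℝ (v '' ↑I)) = {0} := by
  classical
  set e0 : Fin d := ⟨0, hd⟩ with he0
  set w : Fin d → EuclideanSpace ℝ (Fin d) :=
    fun j => EuclideanSpace.single e0 x + EuclideanSpace.single j δ with hwdef
  have hwapp : ∀ j m : Fin d, w j m = (if m = e0 then x else 0) + (if m = j then δ else 0) := by
    intro j m
    simp [hwdef, PiLp.add_apply, EuclideanSpace.single_apply]
  -- finset versions of the cardinality hypotheses
  set S0 : Finset (Fin n) := univ.filter (fun i => v i = 0) with hS0def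
  set S : Fin d → Finset (Fin n) := fun j => univ.filter (fun i => v i = w j) with hSdef
  have hS0 : S0.card = t + 1 := by
    rw [← h0, ← Set.ncard_coe_finset]
    congr 1; ext i; simp [hS0def]
  have hS : ∀ j, (S j).card = t := by
    intro j
    rw [← hj j, ← Set.ncard_coe_finset]
    congr 1; ext i; simp [hSdef, hwdef]
  -- the values w j are pairwise distinct and nonzero
  have hwne : ∀ j, w j ≠ 0 := by
    intro j h
    have h2 : w j e0 = 0 := by rw [h]; rfl
    rw [hwapp, if_pos rfl] at h2
    split at h2 <;> linarith
  have hwinj : ∀ j j' : Fin d, j ≠ j' → w j ≠ w j' := by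
    intro j j' hne h
    have h2 : w j j = w j' j := by rw [h]
    rw [hwapp, hwapp, if_pos rfl, if_neg hne] at h2
    linarith
  -- the sets S0, S j partition Fin n
  have hdisj : ∀ j j' : Fin d, j ≠ j' → Disjoint (S j) (S j') := by
    intro j j' hne
    rw [Finset.disjoint_left]
    intro i hi hi'
    simp [hSdef] at hi hi'
    exact hwinj j j' hne (hi.symm.trans hi')
  have hdisj0 : Disjoint S0 (univ.biUnion S) := by
    rw [Finset.disjoint_left]
    intro i hi hi'
    simp [hS0def, hSdef] at hi hi'
    obtain ⟨j, hj'⟩ := hi'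
    exact hwne j (hj'.symm.trans hi)
  have hbu : (univ.biUnion S).card = d * t := by
    rw [Finset.card_biUnion (fun j _ j' _ h => hdisj j j' h)]
    simp [hS, Finset.card_univ]
  have huniv : S0 ∪ univ.biUnion S = univ := by
    apply Finset.eq_univ_of_card
    rw [Finset.card_union_of_disjoint hdisj0, hS0, hbu, Fintype.card_fin, hn]
    ring
  have hcases : ∀ i : Fin n, v i = 0 ∨ ∃ j, v i = w j := by
    intro i
    have : i ∈ S0 ∪ univ.biUnion S := huniv ▸ Finset.mem_univ i
    rcases Finset.mem_union.mp this with h | h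
    · left; simpa [hS0def] using h
    · right; simp [hSdef] at h; exact h
  have hnt : t ≤ n := by
    have : t ≤ (d + 1) * t := Nat.le_mul_of_pos_left t (by omega)
    omega
  -- the main equality
  ext p
  simp only [Set.mem_iInter, Set.mem_singleton_iff]
  constructor
  · intro hp
    -- p lies in conv(v '' (S j)ᶜ) for each j
    have hcard : ∀ j, ((S j)ᶜ : Finset (Fin n)).card = n - t := by
      intro j
      rw [Finset.card_compl, hS, Fintype.card_fin]
    have hpj : ∀ j, p ∈ convexHull ℝ (v '' ↑((S j)ᶜ : Finset (Fin n))) :=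
      fun j => hp _ (hcard j)
    -- Step A: coordinates other than e0 vanish
    have hA : ∀ j : Fin d, j ≠ e0 → p j = 0 := by
      intro j hje
      have hsub : v '' ↑((S j)ᶜ : Finset (Fin n)) ⊆ {q : EuclideanSpace ℝ (Fin d) | q j = 0} := by
        rintro q ⟨i, hi, rfl⟩
        simp only [Finset.coe_compl, Set.mem_compl_iff, Finset.mem_coe] at hi
        have hvi : v i ≠ w j := by
          intro h; exact hi (by simp [hSdef, h])
        rcases hcases i with h | ⟨k, hk⟩
        · simp [h]
        · have hkj : k ≠ j := fun h => hvi (h ▸ hk)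
          simp only [Set.mem_setOf_eq, hk, hwapp]
          simp [hje, hkj.symm]
      have hconv : Convex ℝ {q : EuclideanSpace ℝ (Fin d) | q j = 0} := by
        intro a ha b hb s u hs hu hsu
        simp only [Set.mem_setOf_eq] at *
        simp [PiLp.add_apply, PiLp.smul_apply, ha, hb]
      exact convexHull_min hsub hconv (hpj j)
    -- Step B: the functional (x+δ)·q e0 - x·∑ q k vanishes on conv(v '' (S e0)ᶜ)
    have hB : (x + δ) * p e0 - x * ∑ k, p k = 0 := by
      have hsub : v '' ↑((S e0)ᶜ : Finset (Fin n)) ⊆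
          {q : EuclideanSpace ℝ (Fin d) | (x + δ) * q e0 - x * ∑ k, q k = 0} := by
        rintro q ⟨i, hi, rfl⟩
        simp only [Finset.coe_compl, Set.mem_compl_iff, Finset.mem_coe] at hi
        have hvi : v i ≠ w e0 := by
          intro h; exact hi (by simp [hSdef, h])
        rcases hcases i with h | ⟨k, hk⟩
        · simp [h]
        · have hke : k ≠ e0 := fun h => hvi (h ▸ hk)
          simp only [Set.mem_setOf_eq, hk]
          have h1 : w k e0 = x := by rw [hwapp]; simp [hke.symm]
          have h2 : ∑ m, w k m = x + δ := by
            simp only [hwapp]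
            rw [Finset.sum_add_distrib, Finset.sum_ite_eq' univ e0 (fun _ => x),
              Finset.sum_ite_eq' univ k (fun _ => δ)]
            simp
          rw [h1, h2]; ring
      have hconv : Convex ℝ {q : EuclideanSpace ℝ (Fin d) |
          (x + δ) * q e0 - x * ∑ k, q k = 0} := by
        intro a ha b hb s u hs hu hsu
        simp only [Set.mem_setOf_eq] at *
        simp only [PiLp.add_apply, PiLp.smul_apply, smul_eq_mul,
          Finset.sum_add_distrib, ← Finset.mul_sum]
        linear_combination s * ha + u * hb
      exact convexHull_min hsub hconv (hpj e0)
    -- conclude p = 0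
    have hsum : ∑ k, p k = p e0 := by
      rw [← Finset.sum_subset (Finset.subset_univ {e0})]
      · simp
      · intro k _ hk
        exact hA k (by simpa using hk)
    have hpe0 : p e0 = 0 := by
      rw [hsum] at hB
      have : δ * p e0 = 0 := by linarith
      have := mul_eq_zero.mp this
      rcases this with h | h
      · linarith
      · exact h
    ext m
    by_cases hm : m = e0
    · rw [hm]; exact hpe0
    · simp [hA m hm]
  · rintro rfl I hI
    -- I must meet S0
    have hmeet : (I ∩ S0).Nonempty := by
      rw [← Finset.card_pos]
      have h1 := Finset.card_union_add_card_inter I S0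
      have h2 : (I ∪ S0).card ≤ n := by
        simpa [Fintype.card_fin] using Finset.card_le_univ (I ∪ S0)
      omega
    obtain ⟨i, hi⟩ := hmeet
    rw [Finset.mem_inter] at hi
    have hvi : v i = 0 := by
      have := hi.2; simp [hS0def] at this; exact this
    have : (0 : EuclideanSpace ℝ (Fin d)) ∈ v '' ↑I := ⟨i, hi.1, hvi⟩
    exact subset_convexHull ℝ _ this
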